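/- Let u,v ∈ V\R with d_{G⁻}(u,v) < d⊤_uv, where G⁻ = G[V\R]. Then no shortest u-v path in G passes through any landmark, and the shortest path graph G_uv (in G) equals the shortest path graph of u and v computed in G⁻. -/

import Mathlib

open SimpleGraph

variable {V : Type}

/-- `(r, d_G(u,r))` is an entry of the path labelling `L(u)`: some shortest
`u`-`r` path meets the landmark set `R` only in `r`. -/
def LEntry (G : SimpleGraph V) (R : Set V) (u r : V) : Prop :=
  ∃ w : G.Walk u r, w.length = G.dist u r ∧ ∀ x ∈ w.support, x ∈ R → x = r

/-- `(r, r')` is an edge of the meta-graph `M`: some shortest `r`-`r'` path in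
`G` contains no landmark other than `r` and `r'`. Its weight is `d_G(r,r')`. -/
def MEdge (G : SimpleGraph V) (R : Set V) (r r' : V) : Prop :=
  r ≠ r' ∧ ∃ w : G.Walk r r', w.length = G.dist r r' ∧
    ∀ x ∈ w.support, x ∈ R → x = r ∨ x = r'

/-- There is a walk in the weighted meta-graph from `r` to `r'` of total
weight `n` (each meta-edge `(s,s')` having weight `d_G(s,s')`). -/
inductive MWalkLen (G : SimpleGraph V) (R : Set V) : V → V → ℕ → Prop
  | nil (r : V) : MWalkLen G R r r 0
  | cons {r r' r'' : V} {n : ℕ} (h : MEdge G R r r') (hw : MWalkLen G R r' r'' n) :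
      MWalkLen G R r r'' (G.dist r r' + n)

/-- Weighted shortest-path distance `d_M` in the meta-graph (`⊤` if unreachable). -/
noncomputable def dM (G : SimpleGraph V) (R : Set V) (r r' : V) : ℕ∞ :=
  sInf {x : ℕ∞ | ∃ n : ℕ, MWalkLen G R r r' n ∧ x = (n : ℕ∞)}

/-- The sketch upper bound
`d⊤_uv = min {δ_ur + d_M(r,r') + δ_vr' : (r,δ_ur) ∈ L(u), (r',δ_vr') ∈ L(v)}`. -/
noncomputable def dTop (G : SimpleGraph V) (R : Set V) (u v : V) : ℕ∞ :=
  sInf {x : ℕ∞ | ∃ r r', r ∈ R ∧ r' ∈ R ∧ LEntry G R u r ∧ LEntry G R v r' ∧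
    x = (G.dist u r : ℕ∞) + dM G R r r' + (G.dist v r' : ℕ∞)}

/-- A vertex lies on some shortest `u`-`v` path of `G'`. -/
def onSPvert {W : Type*} (G' : SimpleGraph W) (u v x : W) : Prop :=
  ∃ w : G'.Walk u v, w.length = G'.dist u v ∧ x ∈ w.support

/-- An edge lies on some shortest `u`-`v` path of `G'`. -/
def onSPedge {W : Type*} (G' : SimpleGraph W) (u v : W) (e : Sym2 W) : Prop :=
  ∃ w : G'.Walk u v, w.length = G'.dist u v ∧ e ∈ w.edges

-- AUX
def liftWalk {G : SimpleGraph V} {S : Set V} :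
    ∀ {a b : V} (w : G.Walk a b), (∀ x ∈ w.support, x ∈ S) →
      ∀ (ha : a ∈ S) (hb : b ∈ S), (G.induce S).Walk ⟨a, ha⟩ ⟨b, hb⟩
  | _, _, .nil, _, _, _ => .nil
  | _, _, .cons adj p, h, ha, hb =>
      .cons (by exact adj)
        (liftWalk p (fun x hx => h x (List.mem_cons_of_mem _ hx))
          (h _ (by simp [Walk.support_cons])) hb)

lemma length_liftWalk {G : SimpleGraph V} {S : Set V} :
    ∀ {a b : V} (w : G.Walk a b) (h : ∀ x ∈ w.support, x ∈ S) (ha : a ∈ S) (hb : b ∈ S),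
      (liftWalk w h ha hb).length = w.length
  | _, _, .nil, _, _, _ => rfl
  | _, _, .cons adj p, h, ha, hb => by
      simp [liftWalk, length_liftWalk p _ _ _]
      exact congrArg (· + 1) (length_liftWalk p _ _ _)

lemma support_liftWalk {G : SimpleGraph V} {S : Set V} :
    ∀ {a b : V} (w : G.Walk a b) (h : ∀ x ∈ w.support, x ∈ S) (ha : a ∈ S) (hb : b ∈ S),
      (liftWalk w h ha hb).support.map Subtype.val = w.support
  | _, _, .nil, _, _, _ => rfl
  | _, _, .cons adj p, h, ha, hb => by
      simp [liftWalk, support_liftWalk p _ _ _]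
      exact congrArg (_ :: ·) (by simpa using support_liftWalk p _ _ hb)

lemma edges_liftWalk {G : SimpleGraph V} {S : Set V} :
    ∀ {a b : V} (w : G.Walk a b) (h : ∀ x ∈ w.support, x ∈ S) (ha : a ∈ S) (hb : b ∈ S),
      (liftWalk w h ha hb).edges.map (Sym2.map Subtype.val) = w.edges
  | _, _, .nil, _, _, _ => rfl
  | _, _, .cons adj p, h, ha, hb => by
      simp [liftWalk, edges_liftWalk p _ _ _]
      exact congrArg (_ :: ·) (edges_liftWalk p _ _ hb)

lemma exists_split_first {G : SimpleGraph V} {R : Set V} {a b : V} (w : G.Walk a b)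
    (hx : ∃ x ∈ w.support, x ∈ R) :
    ∃ r, r ∈ R ∧ ∃ (w1 : G.Walk a r) (w2 : G.Walk r b),
      w1.length + w2.length = w.length ∧ ∀ x ∈ w1.support, x ∈ R → x = r := by
  induction w with
  | nil =>
    obtain ⟨x, hxs, hxR⟩ := hx
    simp only [Walk.support_nil, List.mem_singleton] at hxs
    subst hxs
    exact ⟨x, hxR, .nil, .nil, rfl, by simp⟩
  | @cons a c b adj p ih =>
    by_cases haR : a ∈ R
    · exact ⟨a, haR, .nil, .cons adj p, by simp, by simp⟩
    · have hx' : ∃ x ∈ p.support, x ∈ R := by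
        obtain ⟨x, hxs, hxR⟩ := hx
        simp only [Walk.support_cons, List.mem_cons] at hxs
        rcases hxs with rfl | hxs
        · exact absurd hxR haR
        · exact ⟨x, hxs, hxR⟩
      obtain ⟨r, hrR, w1, w2, hlen, hclean⟩ := ih hx'
      refine ⟨r, hrR, .cons adj w1, w2, by simp [← hlen]; ring, ?_⟩
      intro x hxs hxR
      simp only [Walk.support_cons, List.mem_cons] at hxs
      rcases hxs with rfl | hxs
      · exact absurd hxR haR
      · exact hclean x hxs hxR

lemma MWalkLen.append {G : SimpleGraph V} {R : Set V} {r s t : V} {n m : ℕ}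
    (h1 : MWalkLen G R r s n) (h2 : MWalkLen G R s t m) : MWalkLen G R r t (n + m) := by
  induction h1 with
  | nil => simpa using h2
  | cons he _ ih => rw [add_assoc]; exact MWalkLen.cons he (ih h2)

lemma mwalk_of_shortest {G : SimpleGraph V} (hG : G.Connected) {R : Set V} :
    ∀ (n : ℕ) {r r' : V}, r ∈ R → r' ∈ R → ∀ w : G.Walk r r',
      w.length = G.dist r r' → w.length = n → MWalkLen G R r r' n := by
  intro n
  induction n using Nat.strong_induction_on with
  | _ n ih =>
    classical
    intro r r' hr hr' w hdist hn
    by_cases hclean : ∀ x ∈ w.support, x ∈ R → x = r ∨ x = r'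
    · by_cases hrr : r = r'
      · subst hrr
        have : G.dist r r = 0 := by simp
        have hn0 : n = 0 := by omega
        subst hn0
        exact MWalkLen.nil r
      · have : MWalkLen G R r r' (G.dist r r' + 0) :=
          MWalkLen.cons ⟨hrr, w, hdist, hclean⟩ (MWalkLen.nil r')
        simpa [← hdist, hn] using this
    · push_neg at hclean
      obtain ⟨s, hs, hsR, hsr, hsr'⟩ := hclean
      set w1 := w.takeUntil s hs with hw1
      set w2 := w.dropUntil s hs with hw2
      have hspec : w1.append w2 = w := w.take_spec hs
      have hlen : w1.length + w2.length = w.length := by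
        rw [← hspec, Walk.length_append]
      have h1 : G.dist r s ≤ w1.length := G.dist_le w1
      have h2 : G.dist s r' ≤ w2.length := G.dist_le w2
      have htri : G.dist r r' ≤ G.dist r s + G.dist s r' := hG.dist_triangle
      have he1 : w1.length = G.dist r s := by omega
      have he2 : w2.length = G.dist s r' := by omega
      have hp1 : 0 < w1.length := by
        rcases Nat.eq_zero_or_pos w1.length with h0 | h
        · exact absurd (Walk.eq_of_length_eq_zero h0) hsr.symm
        · exact h
      have hp2 : 0 < w2.length := by
        rcases Nat.eq_zero_or_pos w2.length with h0 | h
        · exact absurd (Walk.eq_of_length_eq_zero h0) hsr'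
        · exact h
      have m1 := ih w1.length (by omega) hr hsR w1 he1 rfl
      have m2 := ih w2.length (by omega) hsR hr' w2 he2 rfl
      have := m1.append m2
      rwa [hlen, hn] at this

lemma dTop_le_dist {G : SimpleGraph V} (hG : G.Connected) {R : Set V} {u v : V}
    (w : G.Walk u v) (hw : w.length = G.dist u v) (hx : ∃ x ∈ w.support, x ∈ R) :
    dTop G R u v ≤ (G.dist u v : ℕ∞) := by
  obtain ⟨r, hrR, w1, w2, hlen, hclean⟩ := exists_split_first w hx
  have h1 : G.dist u r ≤ w1.length := G.dist_le w1
  have h2 : G.dist r v ≤ w2.length := G.dist_le w2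
  have htri := hG.dist_triangle (u := u) (v := r) (w := v)
  have he1 : w1.length = G.dist u r := by omega
  have hL1 : LEntry G R u r := ⟨w1, he1, hclean⟩
  have hrmem : r ∈ w2.reverse.support := by simp
  obtain ⟨r', hr'R, w2a, w2b, hlen2, hclean2⟩ := exists_split_first w2.reverse ⟨r, hrmem, hrR⟩
  have g1 : G.dist v r' ≤ w2a.length := G.dist_le w2a
  have g2 : G.dist r' r ≤ w2b.length := G.dist_le w2b
  have gtri := hG.dist_triangle (u := v) (v := r') (w := r)
  have hrev : w2.reverse.length = w2.length := Walk.length_reverse _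
  have hvr : G.dist v r = G.dist r v := G.dist_comm
  have ge1 : w2a.length = G.dist v r' := by omega
  have ge2 : w2b.length = G.dist r' r := by omega
  have hL2 : LEntry G R v r' := ⟨w2a, ge1, hclean2⟩
  have hmlen : w2b.reverse.length = G.dist r r' := by
    rw [Walk.length_reverse, ge2, G.dist_comm]
  have hm := mwalk_of_shortest hG (w2b.reverse.length) hrR hr'R w2b.reverse hmlen rfl
  have hdM : dM G R r r' ≤ (w2b.reverse.length : ℕ∞) := sInf_le ⟨_, hm, rfl⟩
  have hrev2 : w2b.reverse.length = w2b.length := Walk.length_reverse _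
  calc dTop G R u v ≤ (G.dist u r : ℕ∞) + dM G R r r' + (G.dist v r' : ℕ∞) :=
        sInf_le ⟨r, r', hrR, hr'R, hL1, hL2, rfl⟩
    _ ≤ (G.dist u r : ℕ∞) + (w2b.reverse.length : ℕ∞) + (G.dist v r' : ℕ∞) := by gcongr
    _ = ((G.dist u r + w2b.reverse.length + G.dist v r' : ℕ) : ℕ∞) := by push_cast; ring
    _ = (G.dist u v : ℕ∞) := by norm_cast; omega


/-- if `d_{G⁻}(u,v) < d⊤_uv`, then no shortest `u`-`v` path of `G`
passes through a landmark, and the shortest path graph `G_uv` computed in `G`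
coincides (vertices and edges) with the one computed in `G⁻ = G[V \ R]`. -/
theorem spg_eq_spg_of_sparsified (G : SimpleGraph V) (hG : G.Connected)
    (R : Set V) (u v : V) (hu : u ∉ R) (hv : v ∉ R)
    (h : (G.induce {x | x ∉ R}).edist ⟨u, hu⟩ ⟨v, hv⟩ < dTop G R u v)
    (hfact : (G.dist u v : ℕ∞) =
      min ((G.induce {x | x ∉ R}).edist ⟨u, hu⟩ ⟨v, hv⟩) (dTop G R u v)) :
    (∀ w : G.Walk u v, w.length = G.dist u v → ∀ x ∈ w.support, x ∉ R) ∧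
    (∀ x : V, onSPvert G u v x ↔
      ∃ hx : x ∉ R, onSPvert (G.induce {y | y ∉ R}) ⟨u, hu⟩ ⟨v, hv⟩ ⟨x, hx⟩) ∧
    (∀ x y : V, onSPedge G u v s(x, y) ↔
      ∃ (hx : x ∉ R) (hy : y ∉ R),
        onSPedge (G.induce {z | z ∉ R}) ⟨u, hu⟩ ⟨v, hv⟩ s(⟨x, hx⟩, ⟨y, hy⟩)) := by
  have hedist : (G.induce {x | x ∉ R}).edist ⟨u, hu⟩ ⟨v, hv⟩ = (G.dist u v : ℕ∞) :=
    (hfact.trans (min_eq_left h.le)).symm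
  have hlt : (G.dist u v : ℕ∞) < dTop G R u v := by
    rw [hfact, min_eq_left h.le]; exact h
  have part1 : ∀ w : G.Walk u v, w.length = G.dist u v → ∀ x ∈ w.support, x ∉ R := by
    intro w hw x hxs hxR
    exact absurd (dTop_le_dist hG w hw ⟨x, hxs, hxR⟩) (not_le.mpr hlt)
  have hdist' : (G.induce {x | x ∉ R}).dist ⟨u, hu⟩ ⟨v, hv⟩ = G.dist u v := by
    simp [SimpleGraph.dist, hedist]
  refine ⟨part1, ?_, ?_⟩
  · intro x
    constructor
    · rintro ⟨w, hw, hxs⟩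
      have hall : ∀ y ∈ w.support, y ∈ {y | y ∉ R} := fun y hy => part1 w hw y hy
      have hx : x ∉ R := hall x hxs
      refine ⟨hx, liftWalk w hall hu hv, ?_, ?_⟩
      · rw [length_liftWalk, hw, hdist']
      · have hsupp := support_liftWalk w hall hu hv
        have hx' : x ∈ (liftWalk w hall hu hv).support.map Subtype.val := hsupp ▸ hxs
        obtain ⟨y, hy, hyx⟩ := List.mem_map.mp hx'
        exact (Subtype.ext hyx : y = ⟨x, hx⟩) ▸ hy
    · rintro ⟨hx, w', hw', hxs⟩
      refine ⟨w'.map (Embedding.induce {y | y ∉ R}).toHom, ?_, ?_⟩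
      · exact (Walk.length_map _ _).trans (hw'.trans hdist')
      · exact (congrArg (x ∈ ·) (Walk.support_map _ w')).mpr
          (List.mem_map.mpr ⟨⟨x, hx⟩, hxs, rfl⟩)
  · intro x y
    constructor
    · rintro ⟨w, hw, hes⟩
      have hall : ∀ z ∈ w.support, z ∈ {z | z ∉ R} := fun z hz => part1 w hw z hz
      have hx : x ∉ R := hall x (w.fst_mem_support_of_mem_edges hes)
      have hy : y ∉ R := hall y (w.snd_mem_support_of_mem_edges hes)
      refine ⟨hx, hy, liftWalk w hall hu hv, ?_, ?_⟩
      · rw [length_liftWalk, hw, hdist']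
      · have hedges := edges_liftWalk w hall hu hv
        have he' : s(x, y) ∈ (liftWalk w hall hu hv).edges.map (Sym2.map Subtype.val) :=
          hedges ▸ hes
        obtain ⟨e, he, hee⟩ := List.mem_map.mp he'
        have : e = s((⟨x, hx⟩ : {z | z ∉ R}), ⟨y, hy⟩) := by
          apply Sym2.map.injective Subtype.val_injective
          rw [hee, Sym2.map_pair_eq]
        exact this ▸ he
    · rintro ⟨hx, hy, w', hw', hes⟩
      refine ⟨w'.map (Embedding.induce {z | z ∉ R}).toHom, ?_, ?_⟩
      · exact (Walk.length_map _ _).trans (hw'.trans hdist')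
      · refine (congrArg (s(x, y) ∈ ·) (Walk.edges_map _ w')).mpr ?_
        exact List.mem_map.mpr ⟨_, hes, by rw [Sym2.map_pair_eq]; rfl⟩
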